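/- Suppose the −1 Fourier eigenfunction b satisfies, for all r ≥ 0, b(r) = −4i·sin(πr²/2)²·(2/(π(r²−4)) − 464/(π(r²−2)) + 172128/(πr²) + I(r)), where I is analytic on a neighborhood of [0,∞). Then b(√(2k)) = 0 for every integer k ≥ 3, and each such root is of order at least 2; moreover b(0) = b(√2) = 0, b′(√2) = 928πi√2, and b′(2) = −8πi. -/

import Mathlib

open Real Filter Topology

noncomputable def psiAux (u : ℝ) : ℝ := Real.sin (π * u / 2) ^ 2 / u

lemma hasDerivAt_psiAux_zero : HasDerivAt psiAux (π ^ 2 / 4) 0 := by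
  have h2 : HasDerivAt (fun u : ℝ => π * u / 2) (π / 2) 0 := by
    simpa using ((hasDerivAt_id (0 : ℝ)).const_mul π).div_const 2
  have h1 : HasDerivAt (fun u : ℝ => Real.sin (π * u / 2)) (π / 2) 0 := by
    exact ((Real.hasDerivAt_sin (π * (0 : ℝ) / 2)).comp 0 h2).congr_deriv (by simp : Real.cos (π * (0 : ℝ) / 2) * (π / 2) = π / 2)
  rw [hasDerivAt_iff_tendsto_slope]
  have h3 := hasDerivAt_iff_tendsto_slope.1 h1
  have h4 : Tendsto (fun u : ℝ => (slope (fun u : ℝ => Real.sin (π * u / 2)) 0 u) ^ 2)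
      (𝓝[≠] (0:ℝ)) (𝓝 ((π / 2) ^ 2)) := h3.pow 2
  have heq : slope psiAux 0 = fun u : ℝ =>
      (slope (fun u : ℝ => Real.sin (π * u / 2)) 0 u) ^ 2 := by
    funext u
    simp only [slope_def_field, psiAux]
    rw [div_pow]
    simp [div_div, pow_two]
  rw [heq]
  convert h4 using 2
  ring

lemma sinAux_hasDerivAt (x : ℝ) :
    HasDerivAt (fun r : ℝ => Real.sin (π * r ^ 2 / 2)) (Real.cos (π * x ^ 2 / 2) * (π * x)) x := by
  have h2 : HasDerivAt (fun r : ℝ => π * r ^ 2 / 2) (π * x) x := by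
    have e : π * x = π * ((2:ℕ) * x ^ (2 - 1)) / 2 := by push_cast; ring
    rw [e]
    exact ((hasDerivAt_pow 2 x).const_mul π).div_const 2
  exact (Real.hasDerivAt_sin _).comp x h2

lemma hasDerivAt_zero_of_sin_eq_zero (G : ℝ → ℂ) {x : ℝ}
    (hG : DifferentiableAt ℝ G x) (hx : Real.sin (π * x ^ 2 / 2) = 0) :
    HasDerivAt (fun r : ℝ => -4 * Complex.I * Complex.sin ((π * r ^ 2 / 2 : ℝ) : ℂ) ^ 2 * G r)
      0 x := by
  have hS : HasDerivAt (fun r : ℝ => ((Real.sin (π * r ^ 2 / 2) : ℝ) : ℂ))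
      ((Real.cos (π * x ^ 2 / 2) * (π * x) : ℝ) : ℂ) x := (sinAux_hasDerivAt x).ofReal_comp
  have hS2 := hS.mul hS
  have hprod := (hS2.mul hG.hasDerivAt).const_mul (-4 * Complex.I)
  simp only [Pi.mul_apply] at hprod
  have h0 : ((Real.sin (π * x ^ 2 / 2) : ℝ) : ℂ) = 0 := by exact_mod_cast hx
  rw [h0] at hprod
  simp only [mul_zero, zero_mul, add_zero, zero_add] at hprod
  convert hprod using 2 with r
  · rfl
  simp only [← Complex.ofReal_sin]
  ring


lemma psiAux_mul (c u : ℝ) :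
    Real.sin (π * u / 2) ^ 2 * (c / (π * u)) = c / π * psiAux u := by
  unfold psiAux
  rcases eq_or_ne u 0 with h | h
  · simp [h]
  · field_simp

/-- Roots and special values of the `-1` eigenfunction `b`. -/
theorem stmt_19 (b g : ℝ → ℂ)
    (hg : ∀ x : ℝ, 0 ≤ x → AnalyticAt ℝ g x)
    (hb : ∀ r : ℝ, 0 ≤ r →
      b r = -4 * Complex.I * Complex.sin ((π * r ^ 2 / 2 : ℝ) : ℂ) ^ 2 *
        (((2 / (π * (r ^ 2 - 4)) - 464 / (π * (r ^ 2 - 2)) + 172128 / (π * r ^ 2) : ℝ)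
          : ℂ) + g r)) :
    (∀ k : ℕ, 3 ≤ k →
      b (Real.sqrt (2 * k)) = 0 ∧ deriv b (Real.sqrt (2 * k)) = 0) ∧
    b 0 = 0 ∧ b (Real.sqrt 2) = 0 ∧ b 2 = 0 ∧
    deriv b (Real.sqrt 2) = 928 * (π : ℂ) * Complex.I * (Real.sqrt 2 : ℝ) ∧
    deriv b 2 = -8 * (π : ℂ) * Complex.I := by
  -- values vanish wherever the sine factor vanishes
  have hval : ∀ x : ℝ, 0 ≤ x → Real.sin (π * x ^ 2 / 2) = 0 → b x = 0 := by
    intro x hx hs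
    rw [hb x hx, ← Complex.ofReal_sin, hs]
    simp
  have hsin2k : ∀ k : ℕ, Real.sin (π * (Real.sqrt (2 * k)) ^ 2 / 2) = 0 := by
    intro k
    rw [Real.sq_sqrt (by positivity)]
    have h : π * (2 * (k : ℝ)) / 2 = (k : ℝ) * π := by ring
    rw [h, Real.sin_nat_mul_pi]
  have hsinr2 : Real.sin (π * (Real.sqrt 2) ^ 2 / 2) = 0 := by
    rw [Real.sq_sqrt (by norm_num : (0:ℝ) ≤ 2)]
    have h : π * 2 / 2 = π := by ring
    rw [h, Real.sin_pi]
  have hsin2 : Real.sin (π * (2 : ℝ) ^ 2 / 2) = 0 := by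
    have h : π * (2 : ℝ) ^ 2 / 2 = 2 * π := by ring
    rw [h, Real.sin_two_pi]
  -- transfer of derivative
  have hder : ∀ x : ℝ, 0 < x → deriv b x =
      deriv (fun r : ℝ => -4 * Complex.I * Complex.sin ((π * r ^ 2 / 2 : ℝ) : ℂ) ^ 2 *
        (((2 / (π * (r ^ 2 - 4)) - 464 / (π * (r ^ 2 - 2)) + 172128 / (π * r ^ 2) : ℝ)
          : ℂ) + g r)) x := by
    intro x hx
    apply Filter.EventuallyEq.deriv_eq
    filter_upwards [eventually_gt_nhds hx] with r hr
    exact hb r hr.le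
  -- differentiability of real rational pieces
  have hdiv : ∀ (c a : ℝ) (x : ℝ), x ^ 2 ≠ a →
      DifferentiableAt ℝ (fun r : ℝ => c / (π * (r ^ 2 - a))) x := by
    intro c a x hxa
    exact (differentiableAt_const _).div (by fun_prop)
      (mul_ne_zero Real.pi_ne_zero (sub_ne_zero.mpr hxa))
  have hdiv0 : ∀ (c : ℝ) (x : ℝ), x ^ 2 ≠ 0 →
      DifferentiableAt ℝ (fun r : ℝ => c / (π * r ^ 2)) x := by
    intro c x hx0
    exact (differentiableAt_const _).div (by fun_prop)
      (mul_ne_zero Real.pi_ne_zero hx0)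
  have hofReal : ∀ (f : ℝ → ℝ) (x : ℝ), DifferentiableAt ℝ f x →
      DifferentiableAt ℝ (fun r : ℝ => ((f r : ℝ) : ℂ)) x := by
    intro f x hf
    exact (Complex.ofRealCLM.differentiable.differentiableAt).comp x hf
  have hr2 : (Real.sqrt 2) ^ 2 = 2 := Real.sq_sqrt (by norm_num)
  have hr2pos : 0 < Real.sqrt 2 := Real.sqrt_pos.mpr (by norm_num)
  refine ⟨?_, ?_, ?_, ?_, ?_, ?_⟩
  · -- k ≥ 3
    intro k hk
    have hk3 : (3 : ℝ) ≤ (k : ℝ) := by exact_mod_cast hk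
    have hx2 : (Real.sqrt (2 * k)) ^ 2 = 2 * (k : ℝ) := Real.sq_sqrt (by positivity)
    have hxpos : 0 < Real.sqrt (2 * k) := Real.sqrt_pos.mpr (by linarith)
    refine ⟨hval _ hxpos.le (hsin2k k), ?_⟩
    rw [hder _ hxpos]
    have hG : DifferentiableAt ℝ (fun r : ℝ =>
        (((2 / (π * (r ^ 2 - 4)) - 464 / (π * (r ^ 2 - 2)) + 172128 / (π * r ^ 2) : ℝ)
          : ℂ) + g r)) (Real.sqrt (2 * k)) := by
      refine DifferentiableAt.add (hofReal _ _ ?_) (hg _ hxpos.le).differentiableAt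
      refine DifferentiableAt.add (DifferentiableAt.sub ?_ ?_) ?_
      · exact hdiv 2 4 _ (by rw [hx2]; intro h; linarith)
      · exact hdiv 464 2 _ (by rw [hx2]; intro h; linarith)
      · exact hdiv0 172128 _ (by rw [hx2]; intro h; linarith)
    exact (hasDerivAt_zero_of_sin_eq_zero _ hG (hsin2k k)).deriv
  · exact hval 0 le_rfl (by norm_num)
  · exact hval _ (Real.sqrt_nonneg 2) hsinr2
  · exact hval 2 (by norm_num) hsin2
  · -- derivative at √2
    rw [hder _ hr2pos]
    have hshift : ∀ r : ℝ, Real.sin (π * r ^ 2 / 2) ^ 2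
        = Real.sin (π * (r ^ 2 - 2) / 2) ^ 2 := by
      intro r
      have h : π * r ^ 2 / 2 = π * (r ^ 2 - 2) / 2 + π := by ring
      rw [h, Real.sin_add_pi]
      ring
    have hkey : ∀ r : ℝ, Real.sin (π * r ^ 2 / 2) ^ 2 * (464 / (π * (r ^ 2 - 2)))
        = 464 / π * psiAux (r ^ 2 - 2) := by
      intro r
      rw [hshift r]
      exact psiAux_mul _ _
    have hsplit : (fun r : ℝ => -4 * Complex.I * Complex.sin ((π * r ^ 2 / 2 : ℝ) : ℂ) ^ 2 *
        (((2 / (π * (r ^ 2 - 4)) - 464 / (π * (r ^ 2 - 2)) + 172128 / (π * r ^ 2) : ℝ)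
          : ℂ) + g r))
      = fun r : ℝ => -4 * Complex.I * Complex.sin ((π * r ^ 2 / 2 : ℝ) : ℂ) ^ 2 *
        (((2 / (π * (r ^ 2 - 4)) + 172128 / (π * r ^ 2) : ℝ) : ℂ) + g r)
        + (1856 * Complex.I / (π : ℂ)) * ((psiAux (r ^ 2 - 2) : ℝ) : ℂ) := by
      funext r
      have hc : ((Real.sin (π * r ^ 2 / 2) ^ 2 * (464 / (π * (r ^ 2 - 2))) : ℝ) : ℂ)
          = ((464 / π * psiAux (r ^ 2 - 2) : ℝ) : ℂ) := by exact_mod_cast hkey r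
      simp only [← Complex.ofReal_sin]
      push_cast at hc ⊢
      linear_combination (4 * Complex.I) * hc
    rw [hsplit]
    have hD1 : HasDerivAt (fun r : ℝ => -4 * Complex.I *
        Complex.sin ((π * r ^ 2 / 2 : ℝ) : ℂ) ^ 2 *
        (((2 / (π * (r ^ 2 - 4)) + 172128 / (π * r ^ 2) : ℝ) : ℂ) + g r)) 0 (Real.sqrt 2) := by
      apply hasDerivAt_zero_of_sin_eq_zero _ _ hsinr2
      refine DifferentiableAt.add (hofReal _ _ ?_) (hg _ hr2pos.le).differentiableAt
      refine DifferentiableAt.add ?_ ?_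
      · exact hdiv 2 4 _ (by rw [hr2]; norm_num)
      · exact hdiv0 172128 _ (by rw [hr2]; norm_num)
    have hinner : HasDerivAt (fun r : ℝ => r ^ 2 - 2) (2 * Real.sqrt 2) (Real.sqrt 2) := by
      have := (hasDerivAt_pow 2 (Real.sqrt 2)).sub_const 2
      exact this.congr_deriv (by norm_num)
    have hpsi : HasDerivAt psiAux (π ^ 2 / 4) ((fun r : ℝ => r ^ 2 - 2) (Real.sqrt 2)) := by
      have h0 : (fun r : ℝ => r ^ 2 - 2) (Real.sqrt 2) = 0 := by
        simp only []
        rw [hr2]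
        ring
      rw [h0]
      exact hasDerivAt_psiAux_zero
    have hcomp := HasDerivAt.comp (Real.sqrt 2) hpsi hinner
    have hD2 := (hcomp.ofReal_comp).const_mul (1856 * Complex.I / (π : ℂ))
    have hD2' : HasDerivAt (fun r : ℝ => (1856 * Complex.I / (π : ℂ)) *
        ((psiAux (r ^ 2 - 2) : ℝ) : ℂ))
        ((1856 * Complex.I / (π : ℂ)) * ((π ^ 2 / 4 * (2 * Real.sqrt 2) : ℝ) : ℂ))
        (Real.sqrt 2) := hD2
    rw [(hD1.fun_add hD2').deriv]
    have hπ : ((π : ℝ) : ℂ) ≠ 0 := Complex.ofReal_ne_zero.mpr Real.pi_ne_zero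
    push_cast
    field_simp
    ring
  · -- derivative at 2
    rw [hder 2 (by norm_num)]
    have hshift : ∀ r : ℝ, Real.sin (π * r ^ 2 / 2) ^ 2
        = Real.sin (π * (r ^ 2 - 4) / 2) ^ 2 := by
      intro r
      have h : π * r ^ 2 / 2 = π * (r ^ 2 - 4) / 2 + 2 * π := by ring
      rw [h, Real.sin_add_two_pi]
    have hkey : ∀ r : ℝ, Real.sin (π * r ^ 2 / 2) ^ 2 * (2 / (π * (r ^ 2 - 4)))
        = 2 / π * psiAux (r ^ 2 - 4) := by
      intro r
      rw [hshift r]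
      exact psiAux_mul _ _
    have hsplit : (fun r : ℝ => -4 * Complex.I * Complex.sin ((π * r ^ 2 / 2 : ℝ) : ℂ) ^ 2 *
        (((2 / (π * (r ^ 2 - 4)) - 464 / (π * (r ^ 2 - 2)) + 172128 / (π * r ^ 2) : ℝ)
          : ℂ) + g r))
      = fun r : ℝ => -4 * Complex.I * Complex.sin ((π * r ^ 2 / 2 : ℝ) : ℂ) ^ 2 *
        (((-464 / (π * (r ^ 2 - 2)) + 172128 / (π * r ^ 2) : ℝ) : ℂ) + g r)
        + (-8 * Complex.I / (π : ℂ)) * ((psiAux (r ^ 2 - 4) : ℝ) : ℂ) := by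
      funext r
      have hc : ((Real.sin (π * r ^ 2 / 2) ^ 2 * (2 / (π * (r ^ 2 - 4))) : ℝ) : ℂ)
          = ((2 / π * psiAux (r ^ 2 - 4) : ℝ) : ℂ) := by exact_mod_cast hkey r
      simp only [← Complex.ofReal_sin]
      push_cast at hc ⊢
      linear_combination (-4 * Complex.I) * hc
    rw [hsplit]
    have hD1 : HasDerivAt (fun r : ℝ => -4 * Complex.I *
        Complex.sin ((π * r ^ 2 / 2 : ℝ) : ℂ) ^ 2 *
        (((-464 / (π * (r ^ 2 - 2)) + 172128 / (π * r ^ 2) : ℝ) : ℂ) + g r)) 0 2 := by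
      apply hasDerivAt_zero_of_sin_eq_zero _ _ hsin2
      refine DifferentiableAt.add (hofReal _ _ ?_) (hg 2 (by norm_num)).differentiableAt
      refine DifferentiableAt.add ?_ ?_
      · exact hdiv (-464) 2 2 (by norm_num)
      · exact hdiv0 172128 2 (by norm_num)
    have hinner : HasDerivAt (fun r : ℝ => r ^ 2 - 4) (4 : ℝ) 2 := by
      have := (hasDerivAt_pow 2 (2 : ℝ)).sub_const 4
      exact this.congr_deriv (by norm_num)
    have hpsi : HasDerivAt psiAux (π ^ 2 / 4) ((fun r : ℝ => r ^ 2 - 4) 2) := by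
      have h0 : (fun r : ℝ => r ^ 2 - 4) 2 = 0 := by norm_num
      rw [h0]
      exact hasDerivAt_psiAux_zero
    have hcomp := HasDerivAt.comp (2 : ℝ) hpsi hinner
    have hD2 := (hcomp.ofReal_comp).const_mul (-8 * Complex.I / (π : ℂ))
    have hD2' : HasDerivAt (fun r : ℝ => (-8 * Complex.I / (π : ℂ)) *
        ((psiAux (r ^ 2 - 4) : ℝ) : ℂ))
        ((-8 * Complex.I / (π : ℂ)) * ((π ^ 2 / 4 * 4 : ℝ) : ℂ)) 2 := hD2
    rw [(hD1.fun_add hD2').deriv]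
    have hπ : ((π : ℝ) : ℂ) ≠ 0 := Complex.ofReal_ne_zero.mpr Real.pi_ne_zero
    push_cast
    field_simp
    ring
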